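/- Let C and D be linear codes in F_q^n with dim C + dim D = n, and suppose D is MDS with dim D = n - k where 0 < k < n. If q ≥ 3, then there exists a vector a ∈ (F_q^*)^n such that (aC, D) is a linear complementary pair, i.e., aC ⊕ D = F_q^n. -/

import Mathlib

variable {F : Type*} [Field F] {n : ℕ}

/-- Coordinatewise scaling by `a` as a linear map on `F^n`. -/
def scaleMap (a : Fin n → F) : (Fin n → F) →ₗ[F] (Fin n → F) where
  toFun x := fun i => a i * x i
  map_add' x y := by funext i; simp [mul_add]
  map_smul' r x := by funext i; simp [smul_eq_mul]; ring

lemma scaleMap_apply (a x : Fin n → F) (i : Fin n) : scaleMap a x i = a i * x i := rfl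

/-- determinant of `M + t • u vᵀ` is affine in `t`. -/
lemma det_affine {k : ℕ} (M : Matrix (Fin k) (Fin k) F) (u v : Fin k → F) :
    ∃ α β : F, ∀ t : F, (M + t • Matrix.vecMulVec u v).det = α + β * t := by
  classical
  set Mrows : Fin k → Fin k → F := fun r => M r with hMrows
  refine ⟨M.det, ∑ r, u r * Matrix.detRowAlternating (Function.update Mrows r v), fun t => ?_⟩
  have hdet : (M + t • Matrix.vecMulVec u v).det
      = Matrix.detRowAlternating ((fun r => (t * u r) • v) + Mrows) := by
    show Matrix.detRowAlternating _ = _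
    congr 1
    funext r s
    show M r s + t * (u r * v s) = (t * u r) * v s + M r s
    ring
  have expand := Matrix.detRowAlternating.toMultilinearMap.map_add_univ
    (fun r => (t * u r) • v) Mrows
  simp only [AlternatingMap.coe_multilinearMap] at expand
  rw [hdet, expand]
  set g : Finset (Fin k) → F :=
    fun s => Matrix.detRowAlternating (s.piecewise (fun r => (t * u r) • v) Mrows) with hg
  show ∑ s : Finset (Fin k), g s = _
  have hzero : ∀ s : Finset (Fin k), 1 < s.card → g s = 0 := by
    intro s hs
    obtain ⟨r1, hr1, r2, hr2, hne⟩ := Finset.one_lt_card.mp hs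
    set x := s.piecewise (fun r => (t * u r) • v) Mrows with hx
    have e1 : x r1 = (t * u r1) • v := Finset.piecewise_eq_of_mem _ _ _ hr1
    have step1 : Matrix.detRowAlternating x
        = (t * u r1) • Matrix.detRowAlternating (Function.update x r1 v) := by
      conv_lhs => rw [← Function.update_eq_self r1 x, e1]
      exact Matrix.detRowAlternating.map_update_smul _ _ _ _
    set y := Function.update x r1 v with hy
    have e2 : y r2 = (t * u r2) • v := by
      rw [hy, Function.update_of_ne (Ne.symm hne), hx]
      exact Finset.piecewise_eq_of_mem _ _ _ hr2
    have step2 : Matrix.detRowAlternating y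
        = (t * u r2) • Matrix.detRowAlternating (Function.update y r2 v) := by
      conv_lhs => rw [← Function.update_eq_self r2 y, e2]
      exact Matrix.detRowAlternating.map_update_smul _ _ _ _
    have hz : Matrix.detRowAlternating (Function.update y r2 v) = 0 := by
      apply Matrix.detRowAlternating.map_eq_zero_of_eq _ _ hne
      · rw [Function.update_of_ne hne, hy, Function.update_self, Function.update_self]
    rw [hg]
    simp only [← hx, step1, hy, step2, hz, smul_zero]
    rw [← hy, step2, hz, smul_zero, smul_zero]
  have hsub : (insert (∅ : Finset (Fin k)) ((Finset.univ : Finset (Fin k)).image fun i => ({i} : Finset (Fin k)))) ⊆ Finset.univ :=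
    Finset.subset_univ _
  have hsum : ∑ s : Finset (Fin k), g s
      = ∑ s ∈ insert (∅ : Finset (Fin k)) ((Finset.univ : Finset (Fin k)).image fun i => ({i} : Finset (Fin k))), g s := by
    refine (Finset.sum_subset hsub ?_).symm
    intro s _ hs
    apply hzero
    rcases Nat.lt_or_ge 1 s.card with h | h
    · exact h
    · exfalso
      interval_cases h' : s.card
      · exact hs (by simp [Finset.card_eq_zero.mp h'])
      · obtain ⟨i, rfl⟩ := Finset.card_eq_one.mp h'
        exact hs (by simp)
  rw [hsum]
  have hnotmem : (∅ : Finset (Fin k)) ∉ Finset.univ.image (fun i : Fin k => ({i} : Finset (Fin k))) := by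
    simp
  rw [Finset.sum_insert hnotmem]
  have hempty : g ∅ = M.det := by
    simp only [hg]
    rw [Finset.piecewise_empty]
    rfl
  have hsingle : ∀ i : Fin k, g {i}
      = (t * u i) * Matrix.detRowAlternating (Function.update Mrows i v) := by
    intro i
    simp only [hg]
    simp only [Finset.piecewise_singleton]
    rw [show Function.update Mrows i ((t * u i) • v)
        = Function.update (Function.update Mrows i v) i ((t*u i) • v) by
      rw [Function.update_idem]]
    rw [show Function.update (Function.update Mrows i v) i ((t*u i) • v)
        = Function.update (Function.update Mrows i v) i ((t*u i) • (Function.update Mrows i v) i) by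
      rw [Function.update_self]]
    rw [Matrix.detRowAlternating.map_update_smul, Function.update_eq_self, smul_eq_mul]
  rw [Finset.sum_image (fun i _ j _ h => Finset.singleton_injective h)]
  rw [hempty]
  congr 1
  rw [Finset.sum_mul]
  refine Finset.sum_congr rfl fun i _ => ?_
  rw [hsingle i]; ring

lemma exists_good_point [Fintype F] (hq : 3 ≤ Fintype.card F) (f : (Fin n → F) → F)
    (haff : ∀ (a : Fin n → F) (i : Fin n), ∃ α β : F, ∀ t, f (Function.update a i t) = α + β * t)
    (h0 : ∃ a, f a ≠ 0) : ∃ a, (∀ i, a i ≠ 0) ∧ f a ≠ 0 := by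
  classical
  obtain ⟨z, hz0, hz1⟩ : ∃ z : F, z ≠ 0 ∧ z ≠ 1 := by
    by_contra h
    push_neg at h
    have hsub : (Finset.univ : Finset F) ⊆ {0, 1} := by
      intro x _
      rcases eq_or_ne x 0 with h' | h'
      · simp [h']
      · simp [h x h']
    have h1 := Finset.card_le_card hsub
    have h2 : ({0, 1} : Finset F).card ≤ 2 :=
      (Finset.card_insert_le _ _).trans (by simp)
    rw [Finset.card_univ] at h1
    omega
  have key : ∀ m : ℕ, m ≤ n → ∃ a, (∀ i : Fin n, (i : ℕ) < m → a i ≠ 0) ∧ f a ≠ 0 := by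
    intro m
    induction m with
    | zero =>
      intro _
      obtain ⟨a, ha⟩ := h0
      exact ⟨a, fun i h => absurd h (by omega), ha⟩
    | succ m ih =>
      intro hm1
      obtain ⟨a, ha, hfa⟩ := ih (by omega)
      have hmn : m < n := by omega
      set i : Fin n := ⟨m, hmn⟩ with hi
      obtain ⟨α, β, hab⟩ := haff a i
      have hfa' : α + β * a i ≠ 0 := by
        rw [← hab (a i), Function.update_eq_self]; exact hfa
      obtain ⟨t, ht0, htv⟩ : ∃ t : F, t ≠ 0 ∧ α + β * t ≠ 0 := by
        by_cases h1 : α + β * 1 ≠ 0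
        · exact ⟨1, one_ne_zero, h1⟩
        · push_neg at h1
          refine ⟨z, hz0, fun hzv => ?_⟩
          have hβ : β = 0 := by
            have hd : β * (1 - z) = 0 := by
              have := sub_eq_zero_of_eq (h1.trans hzv.symm)
              ring_nf at this ⊢
              linear_combination this
            rcases mul_eq_zero.mp hd with h | h
            · exact h
            · exact absurd (show z = 1 by linear_combination -h) hz1
          apply hfa'
          rw [hβ] at h1 ⊢
          simpa using h1
      refine ⟨Function.update a i t, fun j hj => ?_, by rw [hab]; exact htv⟩
      rcases eq_or_ne j i with rfl | hne
      · rw [Function.update_self]; exact ht0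
      · rw [Function.update_of_ne hne]
        refine ha j ?_
        have : (j : ℕ) ≠ m := fun h => hne (Fin.ext h)
        omega
  obtain ⟨a, ha, hfa⟩ := key n le_rfl
  exact ⟨a, fun i => ha i i.isLt, hfa⟩

lemma exists_support_set (m : ℕ) (W : Submodule F (Fin n → F))
    (hW : Module.finrank F W ≤ m) :
    ∃ S : Finset (Fin n), S.card ≤ m ∧ ∀ c ∈ W, (∀ i ∈ S, c i = 0) → c = 0 := by
  classical
  induction m generalizing W with
  | zero =>
    have hbot : W = ⊥ := Submodule.finrank_eq_zero.mp (Nat.le_zero.mp hW)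
    exact ⟨∅, le_rfl, fun c hc _ => by simpa [hbot] using hc⟩
  | succ m ih =>
    by_cases hbot : W = ⊥
    · exact ⟨∅, Nat.zero_le _, fun c hc _ => by simpa [hbot] using hc⟩
    · obtain ⟨c₀, hc₀W, hc₀⟩ := Submodule.exists_mem_ne_zero_of_ne_bot hbot
      obtain ⟨i, hi⟩ : ∃ i, c₀ i ≠ 0 := by
        by_contra h; push_neg at h; exact hc₀ (funext h)
      set W' := W ⊓ LinearMap.ker (LinearMap.proj i : (Fin n → F) →ₗ[F] F) with hW'
      have hlt : W' < W := by
        refine lt_of_le_of_ne inf_le_left fun h => hi ?_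
        have : c₀ ∈ W' := h ▸ hc₀W
        simpa using this.2
      have hrk : Module.finrank F W' < Module.finrank F W :=
        Submodule.finrank_lt_finrank_of_lt hlt
      obtain ⟨S', hS'card, hS'⟩ := ih W' (by omega)
      refine ⟨insert i S', (Finset.card_insert_le _ _).trans (by omega), ?_⟩
      intro c hc hvan
      refine hS' c ⟨hc, ?_⟩ fun j hj => hvan j (Finset.mem_insert_of_mem hj)
      simpa using hvan i (Finset.mem_insert_self _ _)

/-- if `dim C + dim D = n`, `D` is MDS of dimension `n - k`
(every nonzero codeword of `D` has weight at least `k + 1`), `0 < k < n`, and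
`q ≥ 3`, then there is `a ∈ (F*)^n` with `(aC, D)` an LCP. -/
theorem exists_scaling_lcp [Fintype F] [DecidableEq F]
    (C D : Submodule F (Fin n → F)) (k : ℕ) (hk0 : 0 < k) (hkn : k < n)
    (hq : 3 ≤ Fintype.card F)
    (hdim : Module.finrank F C + Module.finrank F D = n)
    (hD : Module.finrank F D = n - k)
    (hMDS : ∀ x ∈ D, x ≠ 0 → k + 1 ≤ hammingNorm x) :
    ∃ a : Fin n → F, (∀ i, a i ≠ 0) ∧ IsCompl (C.map (scaleMap a)) D := by
  classical
  have hCk : Module.finrank F C = k := by omega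
  have hFn : Module.finrank F (Fin n → F) = n := by simp
  have hQrk : Module.finrank F ((Fin n → F) ⧸ D) = k := by
    have h1 := Submodule.finrank_quotient_add_finrank D
    rw [hFn] at h1
    omega
  let bC : Module.Basis (Fin k) F C := Module.finBasisOfFinrankEq F C hCk
  let bQ : Module.Basis (Fin k) F ((Fin n → F) ⧸ D) := Module.finBasisOfFinrankEq F _ hQrk
  let Phi : (Fin n → F) → (C →ₗ[F] (Fin n → F) ⧸ D) :=
    fun a => D.mkQ ∘ₗ scaleMap a ∘ₗ C.subtype
  let f : (Fin n → F) → F := fun a => (LinearMap.toMatrix bC bQ (Phi a)).det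
  -- affineness
  have haff : ∀ (a : Fin n → F) (i : Fin n), ∃ α β : F, ∀ t,
      f (Function.update a i t) = α + β * t := by
    intro a i
    set Psi : C →ₗ[F] (Fin n → F) ⧸ D :=
      D.mkQ ∘ₗ (((LinearMap.proj i : (Fin n → F) →ₗ[F] F).comp C.subtype).smulRight
        (Pi.single i (1 : F))) with hPsi
    have hdecomp : ∀ t : F, Phi (Function.update a i t)
        = Phi (Function.update a i 0) + t • Psi := by
      intro t
      apply LinearMap.ext
      intro c
      have hvec : scaleMap (Function.update a i t) (c : Fin n → F)
          = scaleMap (Function.update a i 0) (c : Fin n → F)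
            + t • ((c : Fin n → F) i • (Pi.single i (1 : F) : Fin n → F)) := by
        funext j
        rcases eq_or_ne j i with rfl | hne
        · simp [scaleMap_apply, Function.update_self, Pi.single_apply]
        · simp [scaleMap_apply, Function.update_of_ne hne, Pi.single_apply, hne]
      simp only [Phi, LinearMap.comp_apply, LinearMap.add_apply, LinearMap.smul_apply,
        Submodule.subtype_apply]
      rw [hvec, map_add, map_smul]
      congr 1
    set M : Matrix (Fin k) (Fin k) F := LinearMap.toMatrix bC bQ (Phi (Function.update a i 0))
      with hM
    set u : Fin k → F := fun r => bQ.repr (D.mkQ (Pi.single i (1:F))) r with hu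
    set v : Fin k → F := fun s => (bC s : Fin n → F) i with hv
    have hmat : ∀ t : F, LinearMap.toMatrix bC bQ (Phi (Function.update a i t))
        = M + t • Matrix.vecMulVec u v := by
      intro t
      rw [hdecomp t, map_add, map_smul, hM]
      congr 1
      congr 1
      apply Matrix.ext
      intro r s
      rw [LinearMap.toMatrix_apply, Matrix.vecMulVec_apply, hPsi]
      simp only [LinearMap.comp_apply, LinearMap.smulRight_apply, LinearMap.proj_apply,
        Submodule.subtype_apply, map_smul, Finsupp.smul_apply, smul_eq_mul]
      simp only [hu, hv]
      ring
    obtain ⟨α, β, hdet⟩ := det_affine M u v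
    exact ⟨α, β, fun t => by rw [show f (Function.update a i t)
      = (LinearMap.toMatrix bC bQ (Phi (Function.update a i t))).det from rfl, hmat t, hdet t]⟩
  -- nonvanishing at indicator of a suitable S
  obtain ⟨S₀, hS₀card, hS₀⟩ := exists_support_set k C (le_of_eq hCk)
  obtain ⟨S, hS₀S, hScard⟩ := Finset.exists_superset_card_eq hS₀card (by simpa using le_of_lt hkn)
  set a₀ : Fin n → F := fun i => if i ∈ S then 1 else 0 with ha₀
  have hinj₀ : Function.Injective (Phi a₀) := by
    rw [← LinearMap.ker_eq_bot, Submodule.eq_bot_iff]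
    intro c hc
    rw [LinearMap.mem_ker] at hc
    have hmem : scaleMap a₀ (c : Fin n → F) ∈ D := by
      simpa [Phi, Submodule.Quotient.mk_eq_zero] using hc
    set x := scaleMap a₀ (c : Fin n → F) with hx
    have hnorm : hammingNorm x ≤ k := by
      rw [← hScard]
      apply Finset.card_le_card
      intro j hj
      simp only [hammingNorm, Finset.mem_filter] at hj
      by_contra hjS
      exact hj.2 (by simp [hx, scaleMap_apply, ha₀, hjS])
    have hx0 : x = 0 := by
      by_contra hxne
      have := hMDS x hmem hxne
      omega
    have hvan : ∀ i ∈ S₀, (c : Fin n → F) i = 0 := by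
      intro i hiS₀
      have hiS : i ∈ S := hS₀S hiS₀
      have := congrFun hx0 i
      simpa [hx, scaleMap_apply, ha₀, hiS] using this
    exact Subtype.ext (hS₀ (c : Fin n → F) c.2 hvan)
  have hfin : Module.finrank F C = Module.finrank F ((Fin n → F) ⧸ D) := by rw [hCk, hQrk]
  have hbij₀ : Function.Bijective (Phi a₀) :=
    ⟨hinj₀, (LinearMap.injective_iff_surjective_of_finrank_eq_finrank hfin).mp hinj₀⟩
  have hf₀ : f a₀ ≠ 0 := by
    set e := LinearEquiv.ofBijective (Phi a₀) hbij₀ with he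
    have hcomp : ((e.symm : ((Fin n → F) ⧸ D) →ₗ[F] C) ∘ₗ Phi a₀) = LinearMap.id := by
      apply LinearMap.ext
      intro c
      simp [he]
    have hAB : LinearMap.toMatrix bQ bC (e.symm : ((Fin n → F) ⧸ D) →ₗ[F] C)
        * LinearMap.toMatrix bC bQ (Phi a₀) = 1 := by
      rw [← LinearMap.toMatrix_comp bC bQ bC, hcomp, LinearMap.toMatrix_id]
    intro hf
    have := congrArg Matrix.det hAB
    rw [Matrix.det_mul, Matrix.det_one] at this
    rw [show f a₀ = (LinearMap.toMatrix bC bQ (Phi a₀)).det from rfl] at hf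
    rw [hf, mul_zero] at this
    exact one_ne_zero this.symm
  obtain ⟨a, hane, hfa⟩ := exists_good_point hq f haff ⟨a₀, hf₀⟩
  set A : Matrix (Fin k) (Fin k) F := LinearMap.toMatrix bC bQ (Phi a) with hA
  have hAdet : IsUnit A.det := isUnit_iff_ne_zero.mpr hfa
  have hinv : A⁻¹ * A = 1 := Matrix.nonsing_inv_mul A hAdet
  have hleft : (Matrix.toLin bQ bC A⁻¹) ∘ₗ Phi a = LinearMap.id := by
    have h1 : Matrix.toLin bC bC (A⁻¹ * A)
        = (Matrix.toLin bQ bC A⁻¹) ∘ₗ (Matrix.toLin bC bQ A) := Matrix.toLin_mul bC bQ bC _ _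
    rw [hinv, Matrix.toLin_one, hA, Matrix.toLin_toMatrix] at h1
    exact h1.symm
  have hinj : Function.Injective (Phi a) := by
    have h2 : Function.Injective ((Matrix.toLin bQ bC A⁻¹) ∘ₗ Phi a) := by
      rw [hleft]; exact fun x y h => h
    rw [LinearMap.coe_comp] at h2
    exact Function.Injective.of_comp h2
  have hsurj : Function.Surjective (Phi a) :=
    (LinearMap.injective_iff_surjective_of_finrank_eq_finrank hfin).mp hinj
  refine ⟨a, hane, ?_, ?_⟩
  · rw [Submodule.disjoint_def]
    intro x hx hxD
    obtain ⟨c, hcC, rfl⟩ := Submodule.mem_map.mp hx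
    have h0 : Phi a ⟨c, hcC⟩ = 0 := by
      simp only [Phi, LinearMap.comp_apply, Submodule.subtype_apply, Submodule.mkQ_apply]
      rwa [Submodule.Quotient.mk_eq_zero]
    have : (⟨c, hcC⟩ : C) = 0 := hinj (by rw [h0, map_zero])
    rw [show c = (0 : Fin n → F) from congrArg Subtype.val this]
    simp
  · rw [codisjoint_iff, eq_top_iff]
    intro x _
    obtain ⟨c, hc⟩ := hsurj (D.mkQ x)
    refine Submodule.mem_sup.mpr ⟨scaleMap a c, Submodule.mem_map_of_mem c.2,
      x - scaleMap a c, ?_, by ring⟩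
    rw [← Submodule.Quotient.mk_eq_zero D]
    have : D.mkQ (scaleMap a (c : Fin n → F)) = D.mkQ x := hc
    simp only [Submodule.Quotient.mk_sub]
    rw [show Submodule.Quotient.mk (p := D) x = D.mkQ x from rfl,
      show Submodule.Quotient.mk (p := D) (scaleMap a (c : Fin n → F)) = D.mkQ (scaleMap a c) from rfl,
      this, sub_self]
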